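/- For an n×n matrix A of indeterminates, the Hilbert function of the apolar algebra S/Ann(det(A)) in degree k equals C(n,k)², and hence its total length dim_k S/Ann(det(A)) = Σ_{k=0}^{n} C(n,k)² = C(2n,n). -/

import Mathlib

open MvPolynomial

/-- The determinant of the generic `n × n` matrix of indeterminates. -/
noncomputable def genericDet (n : ℕ) (K : Type) [Field K] :
    MvPolynomial (Fin n × Fin n) K :=
  Matrix.det (Matrix.of fun i j : Fin n => X (i, j))

/-- Differentiation by the monomial with exponent vector `m`. -/
noncomputable def mDeriv {σ : Type} {K : Type} [CommSemiring K] (m : σ →₀ ℕ)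
    (F : MvPolynomial σ K) : MvPolynomial σ K :=
  (Finsupp.toMultiset m).toList.foldr (fun p G => pderiv p G) F

/-- The contraction (apolarity) action of a dual polynomial `h` on `F`:
`h ∘ F = Σ_m coeff_m(h) • ∂^m F`. -/
noncomputable def contractAction {σ : Type} {K : Type} [CommSemiring K]
    (h F : MvPolynomial σ K) : MvPolynomial σ K :=
  ∑ m ∈ h.support, h.coeff m • mDeriv m F

set_option linter.unusedSectionVars false

open Finsupp Equiv Finset

section Aux

variable {n : ℕ} {K : Type} [Field K] [CharZero K]

/-- sum of singles along a column set -/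
noncomputable def colSum (C : Finset (Fin n)) (f : Fin n → Fin n) :
    (Fin n × Fin n) →₀ ℕ :=
  ∑ b ∈ C, Finsupp.single (f b, b) 1

lemma colSum_apply (C : Finset (Fin n)) (f : Fin n → Fin n) (p : Fin n × Fin n) :
    colSum C f p = if p.2 ∈ C ∧ p.1 = f p.2 then 1 else 0 := by
  classical
  rw [colSum, Finset.sum_apply']
  rcases p with ⟨a, b⟩
  by_cases hb : b ∈ C
  · rw [Finset.sum_eq_single b]
    · simp only [hb, true_and, Finsupp.single_apply, Prod.mk.injEq]
      by_cases hab : a = f b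
      · simp [hab]
      · rw [if_neg, if_neg hab]
        rintro ⟨h1, -⟩
        exact hab h1.symm
    · intro b' _ hb'
      rw [Finsupp.single_apply, if_neg]
      intro h
      exact hb' (congrArg Prod.snd h)
    · intro h
      exact absurd hb h
  · rw [Finset.sum_eq_zero, if_neg (fun h => hb h.1)]
    intro b' hb'
    rw [Finsupp.single_apply, if_neg]
    intro h
    have h2 : b' = b := congrArg Prod.snd h
    exact hb (h2 ▸ hb')

lemma colSum_le_iff (C : Finset (Fin n)) (f : Fin n → Fin n) (σ : Equiv.Perm (Fin n)) :
    colSum C f ≤ colSum Finset.univ σ ↔ ∀ b ∈ C, σ b = f b := by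
  constructor
  · intro h b hb
    have h2 := h (f b, b)
    rw [colSum_apply, colSum_apply] at h2
    by_contra hne
    rw [if_pos ⟨hb, rfl⟩, if_neg (by rintro ⟨-, he⟩; exact hne he.symm)] at h2
    omega
  · intro h p
    rw [colSum_apply, colSum_apply]
    rcases p with ⟨a, b⟩
    by_cases hb : b ∈ C
    · by_cases hab : a = f b
      · simp [hb, hab, h b hb]
      · simp [hb, hab]
    · simp [hb]

lemma colSum_sub (C : Finset (Fin n)) (f : Fin n → Fin n) (σ : Equiv.Perm (Fin n))
    (h : ∀ b ∈ C, σ b = f b) :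
    colSum Finset.univ σ - colSum C f = colSum Cᶜ σ := by
  classical
  ext p
  rw [Finsupp.tsub_apply, colSum_apply, colSum_apply, colSum_apply]
  rcases p with ⟨a, b⟩
  by_cases hb : b ∈ C
  · have hb' : b ∉ Cᶜ := by simp [hb]
    simp only [hb, hb', true_and, false_and, if_false, Finset.mem_univ]
    by_cases hab : a = f b
    · simp [hab, (h b hb).symm ▸ hab, h b hb]
    · have : ¬ a = σ b := by rw [h b hb]; exact hab
      simp [hab, this]
  · have hb' : b ∈ Cᶜ := by simp [hb]
    simp [hb, hb']

lemma colSum_congr (C : Finset (Fin n)) (f g : Fin n → Fin n)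
    (h : ∀ b ∈ C, f b = g b) : colSum C f = colSum C g := by
  unfold colSum
  exact Finset.sum_congr rfl fun b hb => by rw [h b hb]

lemma my_degree_add (a b : (Fin n × Fin n) →₀ ℕ) :
    (a + b).degree = a.degree + b.degree := by
  rw [Finsupp.degree_eq_weight_one, map_add]

lemma my_degree_single (p : Fin n × Fin n) (c : ℕ) :
    (Finsupp.single p c).degree = c := by
  by_cases hc : c = 0
  · simp [hc, Finsupp.degree]
  · exact Finsupp.degree_single p c

lemma colSum_degree (C : Finset (Fin n)) (f : Fin n → Fin n) :
    (colSum C f).degree = C.card := by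
  classical
  induction C using Finset.induction with
  | empty => simp [colSum, Finsupp.degree]
  | @insert a s ha ih =>
      rw [colSum, Finset.sum_insert ha, my_degree_add, ← colSum, ih,
        my_degree_single, Finset.card_insert_of_notMem ha, add_comm]

lemma colSum_sq (C : Finset (Fin n)) (f : Fin n → Fin n) (p : Fin n × Fin n) :
    colSum C f p ≤ 1 := by
  rw [colSum_apply]; split <;> omega

lemma listDeriv_sum {ι : Type} (l : List (Fin n × Fin n)) (s : Finset ι)
    (f : ι → MvPolynomial (Fin n × Fin n) K) :
    l.foldr (fun p G => pderiv p G) (∑ i ∈ s, f i)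
      = ∑ i ∈ s, l.foldr (fun p G => pderiv p G) (f i) := by
  induction l with
  | nil => rfl
  | cons p l ih =>
      simp only [List.foldr_cons, ih, map_sum]

lemma listDeriv_monomial (l : List (Fin n × Fin n)) (u : (Fin n × Fin n) →₀ ℕ) (c : K)
    (hu : ∀ p, u p ≤ 1) :
    l.foldr (fun p G => pderiv p G) (monomial u c)
      = if (↑l : Multiset (Fin n × Fin n)).toFinsupp ≤ u
          then monomial (u - (↑l : Multiset (Fin n × Fin n)).toFinsupp) c else 0 := by
  classical
  induction l with
  | nil =>
      simp
  | cons p l ih =>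
      have hcons : ((↑(p :: l) : Multiset (Fin n × Fin n))).toFinsupp
          = Finsupp.single p 1 + (↑l : Multiset (Fin n × Fin n)).toFinsupp := by
        rw [show ((↑(p :: l) : Multiset (Fin n × Fin n)))
            = p ::ₘ (↑l : Multiset (Fin n × Fin n)) from rfl,
          ← Multiset.singleton_add, Multiset.toFinsupp_add, Multiset.toFinsupp_singleton]
      set tl := (↑l : Multiset (Fin n × Fin n)).toFinsupp with htl
      rw [List.foldr_cons, ih, hcons]
      by_cases h : tl ≤ u
      · rw [if_pos h, pderiv_monomial]
        have hle : tl p ≤ u p := h p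
        by_cases h1 : (u - tl) p = 0
        · rw [Finsupp.tsub_apply] at h1
          have hcond : ¬ Finsupp.single p 1 + tl ≤ u := by
            intro hc
            have := hc p
            rw [Finsupp.add_apply, Finsupp.single_eq_same] at this
            omega
          rw [if_neg hcond]
          have : u p - tl p = 0 := h1
          rw [Finsupp.tsub_apply, this]
          simp
        · have h1' : (u - tl) p = 1 := by
            rw [Finsupp.tsub_apply] at h1 ⊢
            have := hu p
            omega
          have hcond : Finsupp.single p 1 + tl ≤ u := by
            intro q
            rw [Finsupp.add_apply]
            by_cases hq : p = q
            · subst hq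
              rw [Finsupp.single_eq_same]
              rw [Finsupp.tsub_apply] at h1'
              omega
            · rw [Finsupp.single_apply, if_neg hq, zero_add]
              exact h q
          rw [if_pos hcond, h1']
          rw [show ((1:ℕ):K) = 1 from Nat.cast_one, mul_one, tsub_tsub, add_comm tl]
      · rw [if_neg h, map_zero, if_neg]
        intro hc
        exact h (le_trans (le_add_self) hc)

lemma mDeriv_monomial (m u : (Fin n × Fin n) →₀ ℕ) (c : K) (hu : ∀ p, u p ≤ 1) :
    mDeriv m (monomial u c) = if m ≤ u then monomial (u - m) c else 0 := by
  classical
  rw [mDeriv, listDeriv_monomial _ _ _ hu, Multiset.coe_toList,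
    Finsupp.toMultiset_toFinsupp]

lemma mDeriv_sum {ι : Type} (m : (Fin n × Fin n) →₀ ℕ) (s : Finset ι)
    (f : ι → MvPolynomial (Fin n × Fin n) K) :
    mDeriv m (∑ i ∈ s, f i) = ∑ i ∈ s, mDeriv m (f i) :=
  listDeriv_sum _ _ _

lemma prod_X_colSum (C : Finset (Fin n)) (f : Fin n → Fin n) :
    (∏ b ∈ C, (X (f b, b) : MvPolynomial (Fin n × Fin n) K))
      = monomial (colSum C f) 1 := by
  classical
  induction C using Finset.induction with
  | empty => simp [colSum]
  | @insert a s ha ih =>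
      rw [Finset.prod_insert ha, ih, X, monomial_mul, one_mul]
      congr 1
      rw [colSum, colSum, Finset.sum_insert ha]

lemma genericDet_eq :
    genericDet n K = ∑ σ : Perm (Fin n),
      monomial (colSum Finset.univ σ) (((Perm.sign σ : ℤ) : K)) := by
  rw [genericDet, Matrix.det_apply]
  refine Finset.sum_congr rfl fun σ _ => ?_
  rw [show (∏ i, Matrix.of (fun i j : Fin n =>
        (X (i, j) : MvPolynomial (Fin n × Fin n) K)) (σ i) i)
      = ∏ i, X (σ i, i) from rfl, prod_X_colSum]
  rw [Units.smul_def, smul_monomial, Int.smul_one_eq_cast]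

noncomputable def canonMap {n : ℕ} (R C : Finset (Fin n)) : Fin n → Fin n :=
  if h : R.card = C.card then
    fun b => if hb : b ∈ C then
      R.orderEmbOfFin rfl (Fin.cast h.symm ((C.orderIsoOfFin rfl).symm ⟨b, hb⟩))
    else b
  else id

lemma canonMap_apply (R C : Finset (Fin n)) (h : R.card = C.card) (b : Fin n) (hb : b ∈ C) :
    canonMap R C b
      = R.orderEmbOfFin rfl (Fin.cast h.symm ((C.orderIsoOfFin rfl).symm ⟨b, hb⟩)) := by
  rw [canonMap, dif_pos h, dif_pos hb]

lemma canonMap_mem (R C : Finset (Fin n)) (h : R.card = C.card) {b : Fin n} (hb : b ∈ C) :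
    canonMap R C b ∈ R := by
  rw [canonMap_apply R C h b hb]
  exact R.orderEmbOfFin_mem rfl _

lemma canonMap_injOn (R C : Finset (Fin n)) (h : R.card = C.card) :
    Set.InjOn (canonMap R C) C := by
  intro b1 h1 b2 h2 he
  rw [canonMap_apply R C h b1 h1, canonMap_apply R C h b2 h2] at he
  have h3 := (R.orderEmbOfFin rfl).injective he
  have h4 := Fin.cast_injective h.symm h3
  have h5 := (C.orderIsoOfFin rfl).symm.injective h4
  exact congrArg Subtype.val h5

lemma orderIso_symm_emb (s : Finset (Fin n)) (j : Fin s.card) :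
    (s.orderIsoOfFin rfl).symm ⟨s.orderEmbOfFin rfl j, s.orderEmbOfFin_mem rfl j⟩ = j := by
  rw [OrderIso.symm_apply_eq]
  exact Subtype.ext (coe_orderIsoOfFin_apply s rfl j).symm

lemma canonMap_inv (R C : Finset (Fin n)) (h : R.card = C.card) {b : Fin n} (hb : b ∈ C) :
    canonMap C R (canonMap R C b) = b := by
  rw [canonMap_apply R C h b hb,
    canonMap_apply C R h.symm _ (R.orderEmbOfFin_mem rfl _)]
  rw [orderIso_symm_emb R (Fin.cast h.symm ((C.orderIsoOfFin rfl).symm ⟨b, hb⟩))]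
  rw [show Fin.cast h (Fin.cast h.symm ((C.orderIsoOfFin rfl).symm ⟨b, hb⟩))
      = (C.orderIsoOfFin rfl).symm ⟨b, hb⟩ from rfl]
  rw [← coe_orderIsoOfFin_apply, OrderIso.apply_symm_apply]

lemma canonMap_image (R C : Finset (Fin n)) (h : R.card = C.card) :
    C.image (canonMap R C) = R := by
  apply Finset.eq_of_subset_of_card_le
  · intro a ha
    rcases Finset.mem_image.mp ha with ⟨b, hb, rfl⟩
    exact canonMap_mem R C h hb
  · rw [Finset.card_image_of_injOn (canonMap_injOn R C h), h]

lemma mDeriv_det (m : (Fin n × Fin n) →₀ ℕ) :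
    mDeriv m (genericDet n K) = ∑ σ : Perm (Fin n),
      if m ≤ colSum Finset.univ σ
        then monomial (colSum Finset.univ σ - m) (((Perm.sign σ : ℤ) : K)) else 0 := by
  classical
  rw [genericDet_eq, mDeriv_sum]
  exact Finset.sum_congr rfl fun σ _ => mDeriv_monomial _ _ _ (colSum_sq _ _)

lemma mDeriv_colSum_det (C : Finset (Fin n)) (f : Fin n → Fin n) :
    mDeriv (colSum C f) (genericDet n K) = ∑ σ : Perm (Fin n),
      if (∀ b ∈ C, σ b = f b)
        then monomial (colSum Cᶜ σ) (((Perm.sign σ : ℤ) : K)) else 0 := by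
  classical
  rw [mDeriv_det]
  refine Finset.sum_congr rfl fun σ _ => ?_
  by_cases h : ∀ b ∈ C, σ b = f b
  · rw [if_pos ((colSum_le_iff C f σ).mpr h), if_pos h, colSum_sub C f σ h]
  · rw [if_neg (fun hle => h ((colSum_le_iff C f σ).mp hle)), if_neg h]

end Aux

section Aux2

variable {n : ℕ} {K : Type} [Field K] [CharZero K]

lemma swap_lemma (C : Finset (Fin n)) (σ : Perm (Fin n)) :
    ∃ ε : K, (ε = 1 ∨ ε = -1) ∧
      mDeriv (colSum C σ) (genericDet n K)
        = ε • mDeriv (colSum C (canonMap (C.image σ) C)) (genericDet n K) := by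
  classical
  set R := C.image (σ : Fin n → Fin n) with hR
  have hcard : R.card = C.card := Finset.card_image_of_injOn σ.injective.injOn
  set g := canonMap R C with hg
  have hmem : ∀ c : {x // x ∈ C}, canonMap C R (σ c) ∈ C := fun c =>
    canonMap_mem C R hcard.symm (Finset.mem_image_of_mem σ c.2)
  have he0 : Function.Injective (fun c : {x // x ∈ C} =>
      (⟨canonMap C R (σ c), hmem c⟩ : {x // x ∈ C})) := by
    intro c1 c2 h12
    have h13 : canonMap C R (σ c1) = canonMap C R (σ c2) := congrArg Subtype.val h12
    have h14 := canonMap_injOn C R hcard.symm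
      (Finset.mem_image_of_mem σ c1.2) (Finset.mem_image_of_mem σ c2.2) h13
    exact Subtype.ext (σ.injective h14)
  set e : Perm {x // x ∈ C} :=
    Equiv.ofBijective _ (Finite.injective_iff_bijective.mp he0) with he
  set π : Perm (Fin n) := Equiv.Perm.ofSubtype e with hπ
  have hπ_mem : ∀ b (hb : b ∈ C), π b = canonMap C R (σ b) := by
    intro b hb
    rw [hπ, Equiv.Perm.ofSubtype_apply_of_mem e hb]
    rfl
  have hπ_not : ∀ b, b ∉ C → π b = b := by
    intro b hb
    rw [hπ, Equiv.Perm.ofSubtype_apply_of_not_mem e hb]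
  have hπinv : π⁻¹ = Equiv.Perm.ofSubtype e⁻¹ := by
    rw [hπ]
    exact (map_inv Equiv.Perm.ofSubtype e).symm
  have hπinv_mem : ∀ b, b ∈ C → π⁻¹ b ∈ C := by
    intro b hb
    rw [hπinv, Equiv.Perm.ofSubtype_apply_of_mem e⁻¹ hb]
    exact (e⁻¹ ⟨b, hb⟩).2
  refine ⟨((Perm.sign π : ℤ) : K), ?_, ?_⟩
  · rcases Int.units_eq_one_or (Perm.sign π) with h | h <;> rw [h] <;> simp
  rw [mDeriv_colSum_det, mDeriv_colSum_det]
  have key : ∀ σ'' : Perm (Fin n),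
      (((Perm.sign π : ℤ) : K) • if (∀ b ∈ C, σ'' b = g b)
        then monomial (colSum Cᶜ σ'') (((Perm.sign σ'' : ℤ) : K)) else 0)
      = (if (∀ b ∈ C, (σ'' * π) b = σ b)
        then monomial (colSum Cᶜ (⇑(σ'' * π))) (((Perm.sign (σ'' * π) : ℤ) : K)) else 0) := by
    intro σ''
    have hcond : (∀ b ∈ C, (σ'' * π) b = σ b) ↔ (∀ b ∈ C, σ'' b = g b) := by
      constructor
      · intro H c hc
        have hc' : π⁻¹ c ∈ C := hπinv_mem c hc
        have h1 : σ'' c = σ (π⁻¹ c) := by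
          have := H (π⁻¹ c) hc'
          rwa [Equiv.Perm.mul_apply, show π (π⁻¹ c) = c from Equiv.apply_symm_apply π c] at this
        have h3 : canonMap C R (σ (π⁻¹ c)) = c := by
          have h4 : π (π⁻¹ c) = c := Equiv.apply_symm_apply π c
          rwa [hπ_mem _ hc'] at h4
        have h2 : g c = σ (π⁻¹ c) := by
          conv_lhs => rw [← h3]
          rw [hg]
          exact canonMap_inv C R hcard.symm (Finset.mem_image_of_mem σ hc')
        rw [h1, h2]
      · intro H c hc
        rw [Equiv.Perm.mul_apply, hπ_mem c hc,
          H _ (hmem ⟨c, hc⟩), hg, canonMap_inv C R hcard.symm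
            (Finset.mem_image_of_mem σ hc)]
    by_cases hc : ∀ b ∈ C, σ'' b = g b
    · rw [if_pos (hcond.mpr hc), if_pos hc]
      have hcs : colSum Cᶜ (⇑(σ'' * π)) = colSum Cᶜ σ'' := by
        apply colSum_congr
        intro b hb
        rw [Equiv.Perm.mul_apply, hπ_not b (by simpa using hb)]
      rw [hcs, map_mul, smul_monomial]
      congr 1
      rw [smul_eq_mul]
      push_cast
      ring
    · rw [if_neg (fun H => hc (hcond.mp H)), if_neg hc, smul_zero]
  calc (∑ σ' : Perm (Fin n),
        if (∀ b ∈ C, σ' b = σ b)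
          then monomial (colSum Cᶜ σ') (((Perm.sign σ' : ℤ) : K)) else 0)
      = ∑ σ'' : Perm (Fin n),
        if (∀ b ∈ C, (σ'' * π) b = σ b)
          then monomial (colSum Cᶜ (⇑(σ'' * π))) (((Perm.sign (σ'' * π) : ℤ) : K)) else 0 :=
        (Fintype.sum_bijective (fun σ'' : Perm (Fin n) => σ'' * π)
          (Group.mulRight_bijective π) _ _ (fun σ'' => rfl)).symm
    _ = ∑ σ'' : Perm (Fin n),
        (((Perm.sign π : ℤ) : K) • if (∀ b ∈ C, σ'' b = g b)
          then monomial (colSum Cᶜ σ'') (((Perm.sign σ'' : ℤ) : K)) else 0) :=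
        (Finset.sum_congr rfl fun σ'' _ => (key σ'').symm)
    _ = ((Perm.sign π : ℤ) : K) • ∑ σ'' : Perm (Fin n),
        (if (∀ b ∈ C, σ'' b = g b)
          then monomial (colSum Cᶜ σ'') (((Perm.sign σ'' : ℤ) : K)) else 0) := by
        rw [Finset.smul_sum]

lemma exists_extension (R C : Finset (Fin n)) (h : R.card = C.card) :
    ∃ σ : Perm (Fin n), (∀ b ∈ C, σ b = canonMap R C b) ∧
      (∀ b, b ∉ C → σ b = canonMap Rᶜ Cᶜ b) := by
  classical
  have hcc : Rᶜ.card = Cᶜ.card := by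
    rw [Finset.card_compl, Finset.card_compl, h]
  set s : Fin n → Fin n := fun b => if b ∈ C then canonMap R C b else canonMap Rᶜ Cᶜ b with hs
  have hinj : Function.Injective s := by
    intro b1 b2 he
    by_cases h1 : b1 ∈ C <;> by_cases h2 : b2 ∈ C
    · rw [hs] at he
      simp only [h1, h2, if_pos] at he
      exact canonMap_injOn R C h h1 h2 he
    · exfalso
      rw [hs] at he
      simp only [h1, h2, if_pos, if_neg, if_true, if_false] at he
      have hm1 : canonMap R C b1 ∈ R := canonMap_mem R C h h1
      have hm2 : canonMap Rᶜ Cᶜ b2 ∈ Rᶜ := canonMap_mem Rᶜ Cᶜ hcc (by simpa using h2)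
      rw [he] at hm1
      simp at hm2
      exact hm2 hm1
    · exfalso
      rw [hs] at he
      simp only [h1, h2, if_pos, if_neg, if_true, if_false] at he
      have hm1 : canonMap Rᶜ Cᶜ b1 ∈ Rᶜ := canonMap_mem Rᶜ Cᶜ hcc (by simpa using h1)
      have hm2 : canonMap R C b2 ∈ R := canonMap_mem R C h h2
      rw [he] at hm1
      simp at hm1
      exact hm1 hm2
    · rw [hs] at he
      simp only [h1, h2, if_neg, if_false] at he
      exact canonMap_injOn Rᶜ Cᶜ hcc (by simpa using h1) (by simpa using h2) he
  refine ⟨Equiv.ofBijective s (Finite.injective_iff_bijective.mp hinj), ?_, ?_⟩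
  · intro b hb
    show s b = _
    rw [hs]; simp [hb]
  · intro b hb
    show s b = _
    rw [hs]; simp [hb]

lemma perm_eq_of_colSum_eq (C : Finset (Fin n)) (σ1 σ2 : Perm (Fin n))
    (hC : ∀ b ∈ C, σ1 b = σ2 b)
    (hcs : colSum Cᶜ σ1 = colSum Cᶜ σ2) : σ1 = σ2 := by
  apply Equiv.ext
  intro b
  by_cases hb : b ∈ C
  · exact hC b hb
  · have h1 := congrFun (congrArg (fun (m : (Fin n × Fin n) →₀ ℕ) => (m : (Fin n × Fin n) → ℕ))
      hcs) (σ1 b, b)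
    rw [colSum_apply, colSum_apply] at h1
    have hb' : b ∈ Cᶜ := by simpa using hb
    rw [if_pos ⟨hb', rfl⟩] at h1
    by_contra hne
    rw [if_neg (by rintro ⟨-, he⟩; exact hne he)] at h1
    omega

lemma D_ne_zero (R C : Finset (Fin n)) (h : R.card = C.card) :
    mDeriv (colSum C (canonMap R C)) (genericDet n K) ≠ 0 := by
  classical
  obtain ⟨σs, hσ1, hσ2⟩ := exists_extension R C h
  intro h0
  have hco := congrArg (coeff (colSum Cᶜ σs)) h0
  rw [mDeriv_colSum_det, coeff_sum, coeff_zero] at hco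
  rw [Finset.sum_eq_single_of_mem σs (Finset.mem_univ σs)] at hco
  · rw [if_pos hσ1, coeff_monomial, if_pos rfl] at hco
    exact Int.cast_ne_zero.mpr (Units.ne_zero (Perm.sign σs)) hco
  · intro σ' _ hne
    by_cases hcnd : ∀ b ∈ C, σ' b = canonMap R C b
    · rw [if_pos hcnd, coeff_monomial, if_neg]
      intro heq
      exact hne (perm_eq_of_colSum_eq C σ' σs
        (fun b hb => by rw [hcnd b hb, hσ1 b hb]) heq)
    · rw [if_neg hcnd, coeff_zero]

lemma support_mDeriv_colSum (C : Finset (Fin n)) (f : Fin n → Fin n)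
    (d : (Fin n × Fin n) →₀ ℕ)
    (hd : d ∈ (mDeriv (colSum C f) (genericDet n K)).support) :
    ∃ σ' : Perm (Fin n), (∀ b ∈ C, σ' b = f b) ∧ d = colSum Cᶜ σ' := by
  classical
  rw [mDeriv_colSum_det] at hd
  have h2 := MvPolynomial.support_sum hd
  rw [Finset.mem_biUnion] at h2
  obtain ⟨σ', -, hσ'⟩ := h2
  by_cases hcnd : ∀ b ∈ C, σ' b = f b
  · rw [if_pos hcnd] at hσ'
    have := MvPolynomial.support_monomial_subset hσ'
    rw [Finset.mem_singleton] at this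
    exact ⟨σ', hcnd, this⟩
  · rw [if_neg hcnd] at hσ'
    simp at hσ'

lemma colSum_support_snd (C : Finset (Fin n)) (f : Fin n → Fin n) :
    (colSum C f).support.image Prod.snd = C := by
  classical
  ext b
  simp only [Finset.mem_image, Finsupp.mem_support_iff]
  constructor
  · rintro ⟨⟨a, b'⟩, hp, rfl⟩
    rw [colSum_apply] at hp
    by_contra hb
    rw [if_neg (fun hc => hb hc.1)] at hp
    exact hp rfl
  · intro hb
    exact ⟨(f b, b), by rw [colSum_apply]; simp [hb], rfl⟩

lemma colSum_support_fst (C : Finset (Fin n)) (f : Fin n → Fin n) :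
    (colSum C f).support.image Prod.fst = C.image f := by
  classical
  ext a
  simp only [Finset.mem_image, Finsupp.mem_support_iff]
  constructor
  · rintro ⟨⟨a', b⟩, hp, rfl⟩
    rw [colSum_apply] at hp
    by_cases hb : b ∈ C ∧ a' = f b
    · exact ⟨b, hb.1, hb.2.symm⟩
    · rw [if_neg hb] at hp; exact absurd rfl hp
  · rintro ⟨b, hb, rfl⟩
    exact ⟨(f b, b), by rw [colSum_apply]; simp [hb], rfl⟩

lemma image_compl_perm (R C : Finset (Fin n)) (σ : Perm (Fin n))
    (hR : C.image σ = R) : Cᶜ.image σ = Rᶜ := by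
  classical
  apply Finset.eq_of_subset_of_card_le
  · intro a ha
    rcases Finset.mem_image.mp ha with ⟨b, hb, rfl⟩
    rw [Finset.mem_compl] at hb ⊢
    intro haR
    rw [← hR] at haR
    rcases Finset.mem_image.mp haR with ⟨c, hc, he⟩
    exact hb ((σ.injective he) ▸ hc)
  · rw [Finset.card_image_of_injOn σ.injective.injOn, Finset.card_compl,
      Finset.card_compl, ← hR, Finset.card_image_of_injOn σ.injective.injOn]

end Aux2

section Aux3

variable {n : ℕ} {K : Type} [Field K] [CharZero K]

noncomputable def Dpoly (p : Finset (Fin n) × Finset (Fin n)) :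
    MvPolynomial (Fin n × Fin n) K :=
  mDeriv (colSum p.2 (canonMap p.1 p.2)) (genericDet n K)

lemma mDeriv_det_cases (m : (Fin n × Fin n) →₀ ℕ) :
    mDeriv m (genericDet n K) = 0 ∨
      ∃ (R C : Finset (Fin n)) (ε : K), R.card = C.card ∧ C.card = m.degree ∧
        mDeriv m (genericDet n K) = ε • Dpoly (R, C) := by
  classical
  by_cases hex : ∃ σ : Perm (Fin n), m ≤ colSum Finset.univ σ
  · obtain ⟨σ0, hσ0⟩ := hex
    right
    set C := m.support.image Prod.snd with hC
    have hm : m = colSum C σ0 := by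
      ext p
      rcases p with ⟨a, b⟩
      rw [colSum_apply]
      have hub := hσ0 (a, b)
      rw [colSum_apply] at hub
      by_cases hs : (a, b) ∈ m.support
      · have h1 : m (a, b) ≠ 0 := Finsupp.mem_support_iff.mp hs
        have hcnd : b ∈ Finset.univ ∧ a = σ0 b := by
          by_contra hcc
          rw [if_neg hcc] at hub
          omega
        rw [if_pos ⟨Finset.mem_image.mpr ⟨(a, b), hs, rfl⟩, hcnd.2⟩]
        rw [if_pos hcnd] at hub
        omega
      · have h1 : m (a, b) = 0 := Finsupp.notMem_support_iff.mp hs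
        rw [h1, if_neg]
        rintro ⟨hbC, ha⟩
        rcases Finset.mem_image.mp hbC with ⟨⟨a', b'⟩, hp', hb'⟩
        simp only at hb'
        rw [hb'] at hp'
        have h2 : m (a', b) ≠ 0 := Finsupp.mem_support_iff.mp hp'
        have hub' := hσ0 (a', b)
        rw [colSum_apply] at hub'
        have ha' : a' = σ0 b := by
          by_contra hcc
          rw [if_neg (fun hc => hcc hc.2)] at hub'
          omega
        have haa : a' = a := ha'.trans ha.symm
        exact hs (haa ▸ hp')
    obtain ⟨ε, hε, heq⟩ := swap_lemma (K := K) C σ0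
    refine ⟨C.image σ0, C, ε, Finset.card_image_of_injOn σ0.injective.injOn, ?_, ?_⟩
    · rw [hm, colSum_degree]
    · rw [hm]
      exact heq
  · left
    rw [mDeriv_det]
    apply Finset.sum_eq_zero
    intro σ _
    exact if_neg (fun h => hex ⟨σ, h⟩)

lemma Dpoly_support (R C : Finset (Fin n)) (h : R.card = C.card)
    (d : (Fin n × Fin n) →₀ ℕ)
    (hd : d ∈ (Dpoly (R, C) : MvPolynomial (Fin n × Fin n) K).support) :
    d.support.image Prod.snd = Cᶜ ∧ d.support.image Prod.fst = Rᶜ := by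
  classical
  obtain ⟨σ', hσC, rfl⟩ := support_mDeriv_colSum C (canonMap R C) d hd
  refine ⟨colSum_support_snd _ _, ?_⟩
  rw [colSum_support_fst]
  apply image_compl_perm
  rw [Finset.image_congr (fun b hb => hσC b hb), canonMap_image R C h]

lemma li_aux {ι : Type} (f : ι → MvPolynomial (Fin n × Fin n) K)
    (h0 : ∀ i, f i ≠ 0)
    (hd : ∀ i j, i ≠ j → Disjoint (f i).support (f j).support) :
    LinearIndependent K f := by
  rw [linearIndependent_iff']
  intro s g hsum i hi
  obtain ⟨d, hdm⟩ : ((f i).support).Nonempty := by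
    rw [Finset.nonempty_iff_ne_empty]
    intro hemp
    exact h0 i (MvPolynomial.support_eq_empty.mp hemp)
  have hc := congrArg (MvPolynomial.coeff d) hsum
  rw [MvPolynomial.coeff_zero, MvPolynomial.coeff_sum] at hc
  rw [Finset.sum_eq_single_of_mem i hi] at hc
  · rw [MvPolynomial.coeff_smul, smul_eq_mul] at hc
    rcases mul_eq_zero.mp hc with h | h
    · exact h
    · exact absurd h (MvPolynomial.mem_support_iff.mp hdm)
  · intro j _ hji
    have hdj : d ∉ (f j).support :=
      Finset.disjoint_left.mp (hd i j (Ne.symm hji)) hdm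
    rw [MvPolynomial.coeff_smul, MvPolynomial.notMem_support_iff.mp hdj, smul_zero]

lemma li_D (s : Finset (Finset (Fin n) × Finset (Fin n)))
    (hs : ∀ p ∈ s, p.1.card = p.2.card) :
    LinearIndependent K (fun p : ↥s => (Dpoly (p : Finset (Fin n) × Finset (Fin n)) :
      MvPolynomial (Fin n × Fin n) K)) := by
  classical
  apply li_aux
  · intro p
    exact D_ne_zero p.1.1 p.1.2 (hs p.1 p.2)
  · intro p q hpq
    rw [Finset.disjoint_left]
    intro d hd1 hd2
    have h1 := Dpoly_support p.1.1 p.1.2 (hs p.1 p.2) d hd1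
    have h2 := Dpoly_support q.1.1 q.1.2 (hs q.1 q.2) d hd2
    apply hpq
    apply Subtype.ext
    have hc : p.1.2 = q.1.2 := by
      have := h1.1.symm.trans h2.1
      rwa [compl_inj_iff] at this
    have hr : p.1.1 = q.1.1 := by
      have := h1.2.symm.trans h2.2
      rwa [compl_inj_iff] at this
    exact Prod.ext hr hc

lemma contract_monomial (u : (Fin n × Fin n) →₀ ℕ) (F : MvPolynomial (Fin n × Fin n) K) :
    contractAction (monomial u (1 : K)) F = mDeriv u F := by
  classical
  rw [contractAction, support_monomial, if_neg one_ne_zero, Finset.sum_singleton]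
  rw [show (monomial u (1:K)).coeff u = 1 from by rw [coeff_monomial, if_pos rfl]]
  rw [one_smul]

lemma span_rank (s : Finset (Finset (Fin n) × Finset (Fin n)))
    (hs : ∀ p ∈ s, p.1.card = p.2.card)
    (S : Set (MvPolynomial (Fin n × Fin n) K))
    (hsub : S ⊆ (Submodule.span K
      ((Dpoly : Finset (Fin n) × Finset (Fin n) → MvPolynomial (Fin n × Fin n) K) '' ↑s) : Set _))
    (hsup : ∀ p ∈ s, (Dpoly p : MvPolynomial (Fin n × Fin n) K) ∈ S) :
    Module.finrank K (Submodule.span K S) = s.card := by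
  classical
  have hspan : Submodule.span K S = Submodule.span K
      ((Dpoly : Finset (Fin n) × Finset (Fin n) → MvPolynomial (Fin n × Fin n) K) '' ↑s) := by
    apply le_antisymm
    · exact Submodule.span_le.mpr hsub
    · apply Submodule.span_le.mpr
      rintro x ⟨p, hp, rfl⟩
      exact Submodule.subset_span (hsup p hp)
  have himg : ((Dpoly : Finset (Fin n) × Finset (Fin n) → MvPolynomial (Fin n × Fin n) K)
      '' ↑s) = Set.range (fun p : ↥s => (Dpoly (p : Finset (Fin n) × Finset (Fin n)) :
        MvPolynomial (Fin n × Fin n) K)) := by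
    ext x
    constructor
    · rintro ⟨p, hp, rfl⟩
      exact ⟨⟨p, hp⟩, rfl⟩
    · rintro ⟨⟨p, hp⟩, rfl⟩
      exact ⟨p, hp, rfl⟩
  rw [hspan, himg]
  rw [finrank_span_eq_card (li_D s hs)]
  exact Fintype.card_coe s

end Aux3

/-- the Hilbert function of the apolar algebra `S/Ann(det A)` in
degree `k` (the dimension of the image of the degree-`k` component of `S`
acting on `det A`) equals `C(n,k)²`, and the total length (the dimension of
the image of all of `S` acting on `det A`) equals `C(2n,n)`. -/
theorem hilbert_apolar_det (K : Type) [Field K] [CharZero K]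
    (n k : ℕ) (hk : k ≤ n) :
    Module.finrank K
        (Submodule.span K
          {G : MvPolynomial (Fin n × Fin n) K |
            ∃ h ∈ homogeneousSubmodule (Fin n × Fin n) K k,
              G = contractAction h (genericDet n K)}) = (n.choose k) ^ 2 ∧
      Module.finrank K
          (Submodule.span K
            {G : MvPolynomial (Fin n × Fin n) K |
              ∃ h : MvPolynomial (Fin n × Fin n) K,
                G = contractAction h (genericDet n K)}) = (2 * n).choose n := by
  classical
  constructor
  · have hcard : ((Finset.univ.powersetCard k ×ˢ Finset.univ.powersetCard k :
        Finset (Finset (Fin n) × Finset (Fin n)))).card = (n.choose k)^2 := by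
      rw [Finset.card_product, Finset.card_powersetCard, Finset.card_univ,
        Fintype.card_fin, sq]
    rw [← hcard]
    apply span_rank
    · intro p hp
      rw [Finset.mem_product, Finset.mem_powersetCard, Finset.mem_powersetCard] at hp
      rw [hp.1.2, hp.2.2]
    · rintro G ⟨h, hh, rfl⟩
      rw [SetLike.mem_coe, contractAction]
      apply Submodule.sum_mem
      intro m hm
      apply Submodule.smul_mem
      rcases mDeriv_det_cases (K := K) m with h0 | ⟨R, C, ε, hRC, hdeg, heq⟩
      · rw [h0]; exact Submodule.zero_mem _
      · rw [heq]
        apply Submodule.smul_mem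
        apply Submodule.subset_span
        refine ⟨(R, C), ?_, rfl⟩
        have hdm : m.degree = k := by
          rw [mem_homogeneousSubmodule] at hh
          have h5 := hh (MvPolynomial.mem_support_iff.mp hm)
          rw [Finsupp.degree_eq_weight_one]
          exact h5
        rw [Finset.mem_coe, Finset.mem_product, Finset.mem_powersetCard,
          Finset.mem_powersetCard]
        refine ⟨⟨Finset.subset_univ _, ?_⟩, ⟨Finset.subset_univ _, ?_⟩⟩
        · rw [hRC, hdeg, hdm]
        · rw [hdeg, hdm]
    · intro p hp
      rw [Finset.mem_product, Finset.mem_powersetCard, Finset.mem_powersetCard] at hp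
      refine ⟨monomial (colSum p.2 (canonMap p.1 p.2)) (1:K), ?_, ?_⟩
      · rw [mem_homogeneousSubmodule]
        apply isHomogeneous_monomial
        rw [colSum_degree, hp.2.2]
      · rw [contract_monomial]
        rfl
  · set s2 := Finset.univ.filter
      (fun p : Finset (Fin n) × Finset (Fin n) => p.1.card = p.2.card) with hs2
    have hcard2 : s2.card = (2*n).choose n := by
      rw [Finset.card_eq_sum_card_fiberwise (f := fun p => p.1.card)
        (t := Finset.range (n+1)) ?side]
      case side =>
        intro p hp
        rw [Finset.mem_coe, Finset.mem_range]
        refine Nat.lt_succ_of_le (le_trans (Finset.card_le_card (Finset.subset_univ _)) ?_)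
        rw [Finset.card_univ, Fintype.card_fin]
      have hfib : ∀ j ∈ Finset.range (n+1),
          (s2.filter (fun p => p.1.card = j)).card = (n.choose j) * (n.choose j) := by
        intro j hj
        have hset : s2.filter (fun p => p.1.card = j)
            = Finset.univ.powersetCard j ×ˢ Finset.univ.powersetCard j := by
          ext p
          rw [Finset.mem_filter, hs2, Finset.mem_filter, Finset.mem_product,
            Finset.mem_powersetCard, Finset.mem_powersetCard]
          constructor
          · rintro ⟨⟨-, h1⟩, h2⟩
            exact ⟨⟨Finset.subset_univ _, h2⟩, ⟨Finset.subset_univ _, h1 ▸ h2⟩⟩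
          · rintro ⟨⟨-, h1⟩, -, h2⟩
            exact ⟨⟨Finset.mem_univ _, h1.trans h2.symm⟩, h1⟩
        rw [hset, Finset.card_product, Finset.card_powersetCard, Finset.card_univ,
          Fintype.card_fin]
      rw [Finset.sum_congr rfl hfib, two_mul, Nat.add_choose_eq,
        Finset.Nat.sum_antidiagonal_eq_sum_range_succ_mk]
      refine Finset.sum_congr rfl fun j hj => ?_
      rw [Nat.choose_symm (Nat.lt_succ_iff.mp (Finset.mem_range.mp hj))]
    rw [← hcard2]
    apply span_rank
    · intro p hp
      rw [hs2, Finset.mem_filter] at hp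
      exact hp.2
    · rintro G ⟨h, rfl⟩
      rw [SetLike.mem_coe, contractAction]
      apply Submodule.sum_mem
      intro m hm
      apply Submodule.smul_mem
      rcases mDeriv_det_cases (K := K) m with h0 | ⟨R, C, ε, hRC, hdeg, heq⟩
      · rw [h0]; exact Submodule.zero_mem _
      · rw [heq]
        apply Submodule.smul_mem
        apply Submodule.subset_span
        refine ⟨(R, C), ?_, rfl⟩
        rw [Finset.mem_coe, hs2, Finset.mem_filter]
        exact ⟨Finset.mem_univ _, hRC⟩
    · intro p hp
      refine ⟨monomial (colSum p.2 (canonMap p.1 p.2)) (1:K), ?_⟩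
      rw [contract_monomial]
      rfl
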